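/- Let k ≥ 0 and let X(n, 𝐩(·)) define a multi-parameter random complex process with q_k(t) = Π_{i=0}^k p_i(t)^{C(k+1,i+1)} and r_k(t) = q_{k+1}(t)/q_k(t). If Φ_k(u) = Ψ_k(u) for all u ∈ [0,1), where Φ_k(u) = ∫_0^{ř_k(u)} q_k(s) ds, Ψ_k(u) = ∫_0^{ř_{k−1}(u)} q_k(s) ds, and ř_j is the generalized right-continuous inverse of r_j, then for every t ≥ 0, either q_k(t) = 0 or p_i(t) = 1 for all i = 1, …, k+1; consequently β_k(X_n(t)) = 0 almost surely for every t, and the k-th lifetime sum L_k(𝒳_n) = 0 almost surely. -/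

import Mathlib

open scoped BigOperators

/-- An abstract simplicial complex on the vertex set `Fin n`, given as the finite set of its
(nonempty) simplices. -/
def IsComplex {n : ℕ} (X : Finset (Finset (Fin n))) : Prop :=
  (∀ s ∈ X, s ≠ ∅) ∧ ∀ s ∈ X, ∀ t, t ⊆ s → t ≠ ∅ → t ∈ X

/-- The simplices of cardinality `j` of `X`, where the empty simplex (cardinality `0`,
dimension `-1`) is always present (augmented convention).  Thus `faces X (k+1)` is the set of
`k`-dimensional simplices, and `(faces X 0).card = 1` plays the role of `f₋₁ = 1`. -/
def faces {n : ℕ} (X : Finset (Finset (Fin n))) (j : ℕ) : Finset (Finset (Fin n)) :=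
  (insert (∅ : Finset (Fin n)) X).filter (fun s => s.card = j)

/-- The matrix of the boundary map from chains on simplices of cardinality `j+1` to chains on
simplices of cardinality `j`, with the usual alternating signs (each simplex is oriented by the
increasing order of its vertices).  For `j = 0` this is the augmentation map `⟨v⟩ ↦ 1`. -/
noncomputable def bdryMat {n : ℕ} (X : Finset (Finset (Fin n))) (j : ℕ) :
    Matrix ↥(faces X j) ↥(faces X (j + 1)) ℝ := fun t s =>
  if t.1 ⊆ s.1 then
    (-1 : ℝ) ^ ((s.1 \ t.1).sum fun v => (s.1.filter fun w => w < v).card)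
  else 0

/-- The boundary map (in "cardinality" grading) `∂ : C_{j}(X) → C_{j-1}(X)`, augmented. -/
noncomputable def bdry {n : ℕ} (X : Finset (Finset (Fin n))) (j : ℕ) :
    (↥(faces X (j + 1)) → ℝ) →ₗ[ℝ] (↥(faces X j) → ℝ) :=
  (bdryMat X j).mulVecLin

/-- The `k`-th reduced Betti number of `X` over `ℝ`:
`dim ker ∂_k - dim im ∂_{k+1}` (with the augmented chain complex). -/
noncomputable def betti {n : ℕ} (X : Finset (Finset (Fin n))) (k : ℕ) : ℕ :=
  Module.finrank ℝ (LinearMap.ker (bdry X k)) -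
    Module.finrank ℝ (LinearMap.range (bdry X (k + 1)))

open MeasureTheory
open scoped ENNReal

/-- `q_k(t) = Π_{i=0}^{k} p_i(t)^{C(k+1,i+1)}`. -/
noncomputable def qFun (p : ℕ → ℝ → ℝ) (k : ℕ) (t : ℝ) : ℝ :=
  ∏ i ∈ Finset.range (k + 1), p i t ^ ((k + 1).choose (i + 1))

/-- `r_{k−1}(t) = Π_{i=0}^{k} p_i(t)^{C(k,i)}`. -/
noncomputable def rPrevFun (p : ℕ → ℝ → ℝ) (k : ℕ) (t : ℝ) : ℝ :=
  ∏ i ∈ Finset.range (k + 1), p i t ^ (k.choose i)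

/-- `r_k(t) = Π_{i=0}^{k+1} p_i(t)^{C(k+1,i)}`. -/
noncomputable def rCurFun (p : ℕ → ℝ → ℝ) (k : ℕ) (t : ℝ) : ℝ :=
  ∏ i ∈ Finset.range (k + 2), p i t ^ ((k + 1).choose i)

/-- The generalized (right-continuous) inverse `ř(u) = inf {t ≥ 0 : f(t) > u}`, valued in
`ℝ≥0∞` so that it is `∞` when `f` never exceeds `u`. -/
noncomputable def genInv (f : ℝ → ℝ) (u : ℝ) : ℝ≥0∞ :=
  sInf {x : ℝ≥0∞ | ∃ s : ℝ, x = ENNReal.ofReal s ∧ 0 ≤ s ∧ u < f s}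

/-- `Φ`-type integral: `∫_0^{ř_f(u)} g(s) ds`. -/
noncomputable def phiInt (f g : ℝ → ℝ) (u : ℝ) : ℝ≥0∞ :=
  ∫⁻ s in {s : ℝ | 0 ≤ s ∧ ENNReal.ofReal s < genInv f u}, ENNReal.ofReal (g s)

/-- The law of the multi-parameter random complex process: each simplex `σ` carries an
independent appearance time with distribution function `p (dim σ)`. -/
noncomputable def procMeasure (n : ℕ) (p : ℕ → StieltjesFunction ℝ) :
    Measure (Finset (Fin n) → ℝ) :=
  Measure.pi fun σ => (p (σ.card - 1)).measure

open Classical in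
/-- The complex at time `t`: the simplices all of whose nonempty faces have appeared by
time `t`. -/
noncomputable def XprocAt {n : ℕ} (ω : Finset (Fin n) → ℝ) (t : ℝ) :
    Finset (Finset (Fin n)) :=
  Finset.univ.filter fun σ => σ ≠ ∅ ∧ ∀ ρ ∈ σ.powerset, ρ ≠ ∅ → ω ρ ≤ t

/-- For the multi-parameter random complex process with distribution
functions `p_i` (nondecreasing, right-continuous, `[0,1]`-valued, vanishing for `t < 0`,
tending to `1`), if `Φ_k(u) = Ψ_k(u)` for all `u ∈ [0,1)` — where
`Φ_k(u) = ∫_0^{ř_k(u)} q_k(s) ds` and `Ψ_k(u) = ∫_0^{ř_{k−1}(u)} q_k(s) ds` — then for every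
`t ≥ 0` either `q_k(t) = 0` or `p_i(t) = 1` for all `1 ≤ i ≤ k+1`; consequently
`β_k(X_n(t)) = 0` almost surely for every `t ≥ 0`, and the `k`-th lifetime sum
`L_k(𝒳_n) = ∫_0^∞ β_k(X_n(t)) dt` is `0` almost surely. -/
private def idx {n : ℕ} (a : Fin n) (s : Finset (Fin n)) : ℕ := (s.filter (fun w => w < a)).card

lemma idx_insert_self {n : ℕ} (a : Fin n) (s : Finset (Fin n)) :
    idx a (insert a s) = idx a s := by
  unfold idx
  rw [Finset.filter_insert, if_neg (lt_irrefl a)]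

lemma idx_insert_of_ne {n : ℕ} {a b : Fin n} (s : Finset (Fin n)) (ha : a ∉ s) :
    idx b (insert a s) = idx b s + (if a < b then 1 else 0) := by
  unfold idx
  rw [Finset.filter_insert]
  split_ifs with h
  · rw [Finset.card_insert_of_notMem (fun hc => ha (Finset.mem_filter.mp hc).1)]
  · rw [add_zero]

lemma idx_erase {n : ℕ} {v₀ : Fin n} (a : Fin n) {σ : Finset (Fin n)} (h : v₀ ∈ σ) :
    idx a σ = idx a (σ.erase v₀) + (if v₀ < a then 1 else 0) := by
  unfold idx
  rw [Finset.filter_erase]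
  by_cases hlt : v₀ < a
  · have hm : v₀ ∈ σ.filter (fun w => w < a) := Finset.mem_filter.mpr ⟨h, hlt⟩
    rw [if_pos hlt, Finset.card_erase_of_mem hm]
    have : 0 < (σ.filter (fun w => w < a)).card := Finset.card_pos.mpr ⟨v₀, hm⟩
    omega
  · have hm : v₀ ∉ σ.filter (fun w => w < a) := fun hc => hlt (Finset.mem_filter.mp hc).2
    rw [if_neg hlt, add_zero, Finset.erase_eq_of_notMem hm]

lemma betti_zero_of_no_faces {n k : ℕ} (X : Finset (Finset (Fin n)))
    (h : faces X (k+1) = ∅) : betti X k = 0 := by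
  haveI : IsEmpty ↥(faces X (k+1)) := by
    constructor; rintro ⟨x, hx⟩; rw [h] at hx; exact absurd hx (Finset.notMem_empty x)
  have h1 : Module.finrank ℝ (LinearMap.ker (bdry X k)) = 0 :=
    Module.finrank_zero_of_subsingleton
  simp [betti, h1]

lemma mem_faces_iff {n k : ℕ} {X : Finset (Finset (Fin n))} {V : Finset (Fin n)}
    (hX : ∀ s : Finset (Fin n), s ≠ ∅ → s.card ≤ k + 2 → (s ∈ X ↔ s ⊆ V))
    {j : ℕ} (hj : j ≤ k + 2) (s : Finset (Fin n)) :
    s ∈ faces X j ↔ s.card = j ∧ s ⊆ V := by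
  unfold faces
  rw [Finset.mem_filter, Finset.mem_insert]
  constructor
  · rintro ⟨h1, h2⟩
    refine ⟨h2, ?_⟩
    rcases h1 with rfl | h1
    · exact Finset.empty_subset V
    · by_cases hs : s = ∅
      · subst hs; exact Finset.empty_subset V
      · exact (hX s hs (h2 ▸ hj)).mp h1
  · rintro ⟨h1, h2⟩
    by_cases hs : s = ∅
    · exact ⟨Or.inl hs, h1⟩
    · exact ⟨Or.inr ((hX s hs (h1 ▸ hj)).mpr h2), h1⟩

lemma filter_subset_eq_image {n k : ℕ} {X : Finset (Finset (Fin n))} {V : Finset (Fin n)}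
    (hX : ∀ s : Finset (Fin n), s ≠ ∅ → s.card ≤ k + 2 → (s ∈ X ↔ s ⊆ V))
    {j : ℕ} (hj : j + 1 ≤ k + 2) (σ : Finset (Fin n)) (hσc : σ.card = j) (hσV : σ ⊆ V) :
    (faces X (j+1)).filter (fun τ => σ ⊆ τ) = (V \ σ).image (fun a => insert a σ) := by
  ext τ
  rw [Finset.mem_filter, Finset.mem_image, mem_faces_iff hX hj]
  constructor
  · rintro ⟨⟨hc, hV⟩, hsub⟩
    have hcard : (τ \ σ).card = 1 := by
      rw [Finset.card_sdiff_of_subset hsub, hc, hσc]; omega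
    obtain ⟨a, ha⟩ := Finset.card_eq_one.mp hcard
    refine ⟨a, ?_, ?_⟩
    · have : a ∈ τ \ σ := ha ▸ Finset.mem_singleton_self a
      exact Finset.mem_sdiff.mpr ⟨hV (Finset.mem_sdiff.mp this).1, (Finset.mem_sdiff.mp this).2⟩
    · have := Finset.union_sdiff_of_subset hsub
      rw [ha] at this
      rw [Finset.insert_eq, Finset.union_comm, this]
  · rintro ⟨a, ha, rfl⟩
    rw [Finset.mem_sdiff] at ha
    refine ⟨⟨?_, ?_⟩, Finset.subset_insert a σ⟩
    · rw [Finset.card_insert_of_notMem ha.2, hσc]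
    · exact Finset.insert_subset ha.1 hσV

lemma insert_sdiff_self' {n : ℕ} {a : Fin n} {σ : Finset (Fin n)} (ha : a ∉ σ) :
    insert a σ \ σ = {a} := by
  ext x
  simp only [Finset.mem_sdiff, Finset.mem_insert, Finset.mem_singleton]
  constructor
  · rintro ⟨h1 | h1, h2⟩ <;> [exact h1; exact absurd h1 h2]
  · rintro rfl; exact ⟨Or.inl rfl, ha⟩

lemma bdry_apply_raw {n : ℕ} (X : Finset (Finset (Fin n))) (j : ℕ)
    (z : ↥(faces X (j + 1)) → ℝ) (zh : Finset (Fin n) → ℝ)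
    (hzh : ∀ s : ↥(faces X (j+1)), z s = zh s.1) (σ : ↥(faces X j)) :
    (bdry X j z) σ = ∑ τ ∈ faces X (j+1),
      (if σ.1 ⊆ τ then
        (-1 : ℝ) ^ ((τ \ σ.1).sum fun v => (τ.filter fun w => w < v).card) else 0) * zh τ := by
  rw [bdry, Matrix.mulVecLin_apply, Matrix.mulVec, dotProduct]
  rw [← Finset.sum_coe_sort (faces X (j+1))
    (fun τ => (if σ.1 ⊆ τ then
        (-1 : ℝ) ^ ((τ \ σ.1).sum fun v => (τ.filter fun w => w < v).card) else 0) * zh τ)]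
  exact Finset.sum_congr rfl (fun τ _ => by rw [bdryMat, hzh τ])

lemma bdry_apply_cone {n k : ℕ} {X : Finset (Finset (Fin n))} {V : Finset (Fin n)}
    (hX : ∀ s : Finset (Fin n), s ≠ ∅ → s.card ≤ k + 2 → (s ∈ X ↔ s ⊆ V))
    {j : ℕ} (hj : j + 1 ≤ k + 2)
    (z : ↥(faces X (j + 1)) → ℝ) (zh : Finset (Fin n) → ℝ)
    (hzh : ∀ s : ↥(faces X (j+1)), z s = zh s.1) (σ : ↥(faces X j)) (hσc : σ.1.card = j)
    (hσV : σ.1 ⊆ V) :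
    (bdry X j z) σ = ∑ a ∈ V \ σ.1, (-1 : ℝ) ^ (idx a (insert a σ.1)) * zh (insert a σ.1) := by
  rw [bdry_apply_raw X j z zh hzh σ]
  rw [← Finset.sum_filter_of_ne (p := fun τ => σ.1 ⊆ τ)
    (fun τ _ hne => by by_contra hc; rw [if_neg hc, zero_mul] at hne; exact hne rfl)]
  rw [filter_subset_eq_image hX hj σ.1 hσc hσV]
  rw [Finset.sum_image (fun a ha b _ hab => by
    have : a ∈ insert b σ.1 := hab ▸ Finset.mem_insert_self a σ.1
    rcases Finset.mem_insert.mp this with h | h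
    · exact h
    · exact absurd h (Finset.mem_sdiff.mp ha).2)]
  refine Finset.sum_congr rfl (fun a ha => ?_)
  have haσ : a ∉ σ.1 := (Finset.mem_sdiff.mp ha).2
  rw [if_pos (Finset.subset_insert a σ.1), insert_sdiff_self' haσ, Finset.sum_singleton]
  rfl

lemma betti_eq_zero_of_skeleton {n k : ℕ} (X : Finset (Finset (Fin n))) (V : Finset (Fin n))
    (hX : ∀ s : Finset (Fin n), s ≠ ∅ → s.card ≤ k + 2 → (s ∈ X ↔ s ⊆ V)) :
    betti X k = 0 := by
  rcases V.eq_empty_or_nonempty with rfl | ⟨v₀, hv₀⟩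
  · apply betti_zero_of_no_faces
    rw [Finset.eq_empty_iff_forall_notMem]
    intro s hs
    rw [mem_faces_iff hX (by omega)] at hs
    have h2 := Finset.subset_empty.mp hs.2
    rw [h2] at hs
    simp at hs
  suffices hkr : LinearMap.ker (bdry X k) ≤ LinearMap.range (bdry X (k+1)) by
    have h1 := Submodule.finrank_mono hkr
    rw [betti]
    omega
  intro z hz
  rw [LinearMap.mem_ker] at hz
  classical
  set zh : Finset (Fin n) → ℝ :=
    fun s => if h : s ∈ faces X (k+1) then z ⟨s, h⟩ else 0 with hzh_def
  have hzh : ∀ s : ↥(faces X (k+1)), z s = zh s.1 := fun s => by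
    simp only [hzh_def]; rw [dif_pos s.2]
  set wh : Finset (Fin n) → ℝ := fun τ =>
    if v₀ ∈ τ then (-1 : ℝ) ^ (idx v₀ τ) * zh (τ.erase v₀) else 0 with hwh_def
  set w : ↥(faces X (k+2)) → ℝ := fun τ => wh τ.1 with hw_def
  refine ⟨w, ?_⟩
  funext σ
  obtain ⟨hσc, hσV⟩ := (mem_faces_iff hX (by omega) σ.1).mp σ.2
  have key : (bdry X (k+1)) w σ
      = ∑ a ∈ V \ σ.1, (-1 : ℝ) ^ (idx a (insert a σ.1)) * wh (insert a σ.1) :=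
    bdry_apply_cone hX (by omega) w wh (fun τ => rfl) σ hσc hσV
  rw [key, hzh σ]
  by_cases hv₀σ : v₀ ∈ σ.1
  · -- case v₀ ∈ σ : use the cycle condition at σ' = σ.erase v₀
    set σ' : Finset (Fin n) := σ.1.erase v₀ with hσ'_def
    have hv₀σ' : v₀ ∉ σ' := Finset.notMem_erase v₀ σ.1
    have hσ'c : σ'.card = k := by rw [hσ'_def, Finset.card_erase_of_mem hv₀σ, hσc]; omega
    have hσ'V : σ' ⊆ V := (Finset.erase_subset v₀ σ.1).trans hσV
    have hσ'f : σ' ∈ faces X k := (mem_faces_iff hX (by omega) σ').mpr ⟨hσ'c, hσ'V⟩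
    have hVsplit : V \ σ' = insert v₀ (V \ σ.1) := by
      ext b
      simp only [Finset.mem_sdiff, Finset.mem_insert, hσ'_def, Finset.mem_erase]
      constructor
      · rintro ⟨hbV, hb⟩
        by_cases hbv : b = v₀
        · exact Or.inl hbv
        · exact Or.inr ⟨hbV, fun hc => hb ⟨hbv, hc⟩⟩
      · rintro (rfl | ⟨hbV, hb⟩)
        · exact ⟨hv₀, fun hc => hc.1 rfl⟩
        · exact ⟨hbV, fun hc => hb hc.2⟩
    have hcycle : (0 : ℝ)
        = ∑ b ∈ V \ σ', (-1 : ℝ) ^ (idx b (insert b σ')) * zh (insert b σ') := by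
      have h0 := bdry_apply_cone hX (by omega) z zh hzh ⟨σ', hσ'f⟩ hσ'c hσ'V
      rw [hz] at h0
      exact h0
    rw [hVsplit, Finset.sum_insert (fun hc => (Finset.mem_sdiff.mp hc).2 hv₀σ)] at hcycle
    rw [Finset.insert_erase hv₀σ] at hcycle
    -- abbreviations
    set E := idx v₀ σ.1 with hE_def
    -- termwise identity
    have hA : ∀ a ∈ V \ σ.1, (-1 : ℝ) ^ (idx a (insert a σ.1)) * wh (insert a σ.1)
        = -((-1 : ℝ) ^ E) * ((-1 : ℝ) ^ (idx a (insert a σ')) * zh (insert a σ')) := by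
      intro a ha
      rw [Finset.mem_sdiff] at ha
      have haσ : a ∉ σ.1 := ha.2
      have hav : a ≠ v₀ := fun hc => haσ (hc ▸ hv₀σ)
      have hv₀ins : v₀ ∈ insert a σ.1 := Finset.mem_insert_of_mem hv₀σ
      have herase : (insert a σ.1).erase v₀ = insert a σ' := by
        rw [hσ'_def, Finset.erase_insert_of_ne hav]
      rw [hwh_def]
      simp only [if_pos hv₀ins]
      rw [herase]
      have e1 : idx a (insert a σ.1) = idx a (insert a σ') + (if v₀ < a then 1 else 0) := by
        rw [idx_insert_self, idx_insert_self, idx_erase a hv₀σ]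
      have e2 : idx v₀ (insert a σ.1) = E + (if a < v₀ then 1 else 0) :=
        idx_insert_of_ne σ.1 haσ
      rw [e1, e2]
      rcases lt_or_gt_of_ne hav with hlt | hlt
      · rw [if_neg (asymm hlt), if_pos hlt, add_zero, pow_add]
        ring
      · rw [if_pos hlt, if_neg (asymm hlt), add_zero, pow_add]
        ring
    rw [Finset.sum_congr rfl hA, ← Finset.mul_sum]
    have hS : ∑ a ∈ V \ σ.1, (-1 : ℝ) ^ (idx a (insert a σ')) * zh (insert a σ')
        = -((-1 : ℝ) ^ E * zh σ.1) := by linarith [hcycle]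
    rw [hS]
    have : ((-1 : ℝ) ^ E) * ((-1 : ℝ) ^ E) = 1 := by
      rw [← pow_add]
      exact Even.neg_one_pow ⟨E, by ring⟩
    calc -((-1 : ℝ) ^ E) * -((-1 : ℝ) ^ E * zh σ.1)
        = ((-1 : ℝ) ^ E * (-1 : ℝ) ^ E) * zh σ.1 := by ring
      _ = zh σ.1 := by rw [this, one_mul]
  · -- case v₀ ∉ σ : single cone term
    have hv₀mem : v₀ ∈ V \ σ.1 := Finset.mem_sdiff.mpr ⟨hv₀, hv₀σ⟩
    rw [Finset.sum_eq_single_of_mem v₀ hv₀mem (fun a _ hav => by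
      have : v₀ ∉ insert a σ.1 := by
        rw [Finset.mem_insert]
        rintro (rfl | hc)
        · exact hav rfl
        · exact hv₀σ hc
      rw [hwh_def]
      simp only [if_neg this, mul_zero])]
    rw [hwh_def]
    simp only [if_pos (Finset.mem_insert_self v₀ σ.1)]
    rw [Finset.erase_insert hv₀σ, ← mul_assoc, ← pow_add]
    rw [Even.neg_one_pow ⟨idx v₀ (insert v₀ σ.1), by ring⟩, one_mul]

section Analysis

variable (p : ℕ → StieltjesFunction ℝ)
  (hp01 : ∀ i, ∀ t : ℝ, p i t ∈ Set.Icc (0 : ℝ) 1)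

noncomputable abbrev P : ℕ → ℝ → ℝ := fun i t => p i t

lemma prod_pow_mono (hp01 : ∀ i, ∀ t : ℝ, p i t ∈ Set.Icc (0 : ℝ) 1) {m : ℕ} (e : ℕ → ℕ) :
    Monotone (fun t => ∏ i ∈ Finset.range m, p i t ^ e i) := by
  intro s t hst
  apply Finset.prod_le_prod
  · intro i _; exact pow_nonneg (hp01 i s).1 _
  · intro i _; exact pow_le_pow_left₀ (hp01 i s).1 ((p i).mono hst) _

lemma prod_pow_nonneg (hp01 : ∀ i, ∀ t : ℝ, p i t ∈ Set.Icc (0 : ℝ) 1) {m : ℕ} (e : ℕ → ℕ) (t : ℝ) :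
    0 ≤ ∏ i ∈ Finset.range m, p i t ^ e i :=
  Finset.prod_nonneg (fun i _ => pow_nonneg (hp01 i t).1 _)

lemma prod_pow_le_one (hp01 : ∀ i, ∀ t : ℝ, p i t ∈ Set.Icc (0 : ℝ) 1) {m : ℕ} (e : ℕ → ℕ) (t : ℝ) :
    ∏ i ∈ Finset.range m, p i t ^ e i ≤ 1 :=
  Finset.prod_le_one (fun i _ => pow_nonneg (hp01 i t).1 _)
    (fun i _ => pow_le_one₀ (hp01 i t).1 (hp01 i t).2)

lemma rCur_factor (k : ℕ) (t : ℝ) :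
    rCurFun (P p) k t
      = rPrevFun (P p) k t * ∏ i ∈ Finset.range (k + 1), p (i+1) t ^ (k.choose i) := by
  unfold rCurFun
  rw [Finset.prod_range_succ' (fun i => P p i t ^ ((k + 1).choose i)) (k+1)]
  have h1 : ∀ i ∈ Finset.range (k + 1),
      P p (i+1) t ^ ((k + 1).choose (i+1))
        = p (i+1) t ^ (k.choose i) * p (i+1) t ^ (k.choose (i+1)) := by
    intro i _
    rw [Nat.choose_succ_succ, pow_add]
  rw [Finset.prod_congr rfl h1, Finset.prod_mul_distrib]
  have h2 : ∏ i ∈ Finset.range (k+1), p (i+1) t ^ (k.choose (i+1))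
      = ∏ i ∈ Finset.range k, p (i+1) t ^ (k.choose (i+1)) := by
    rw [Finset.prod_range_succ, Nat.choose_succ_self, pow_zero, mul_one]
  have h3 : rPrevFun (P p) k t = P p 0 t ^ ((k+1).choose 0)
      * ∏ i ∈ Finset.range k, p (i+1) t ^ (k.choose (i+1)) := by
    unfold rPrevFun
    rw [Finset.prod_range_succ' (fun i => P p i t ^ (k.choose i)) k]
    rw [Nat.choose_zero_right, Nat.choose_zero_right, mul_comm]
  rw [h2, h3]
  ring


lemma rCur_le_rPrev (hp01 : ∀ i, ∀ t : ℝ, p i t ∈ Set.Icc (0 : ℝ) 1) (k : ℕ) (t : ℝ) :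
    rCurFun (P p) k t ≤ rPrevFun (P p) k t := by
  rw [rCur_factor]
  apply mul_le_of_le_one_right (prod_pow_nonneg p hp01 _ t)
  exact Finset.prod_le_one (fun i _ => pow_nonneg (hp01 _ t).1 _)
    (fun i _ => pow_le_one₀ (hp01 _ t).1 (hp01 _ t).2)

lemma rCur_lt_rPrev (hp01 : ∀ i, ∀ t : ℝ, p i t ∈ Set.Icc (0 : ℝ) 1) (k : ℕ) (t : ℝ)
    (hq : qFun (P p) k t ≠ 0) {j : ℕ} (hj1 : 1 ≤ j) (hjk : j ≤ k + 1) (hpj : p j t ≠ 1) :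
    rCurFun (P p) k t < rPrevFun (P p) k t := by
  have hpos : ∀ i ∈ Finset.range (k+1), 0 < p i t := by
    intro i hi
    rcases lt_or_eq_of_le (hp01 i t).1 with h | h
    · exact h
    · exfalso; apply hq
      unfold qFun
      apply Finset.prod_eq_zero hi
      have h' : P p i t = 0 := h.symm
      rw [h', zero_pow (Nat.choose_pos (by have := Finset.mem_range.mp hi; omega)).ne']
  have hrPrev_pos : 0 < rPrevFun (P p) k t := by
    unfold rPrevFun
    exact Finset.prod_pos (fun i hi => pow_pos (hpos i hi) _)
  rw [rCur_factor]
  have hD : ∏ i ∈ Finset.range (k + 1), p (i+1) t ^ (k.choose i) < 1 := by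
    have hjm : j - 1 ∈ Finset.range (k+1) := Finset.mem_range.mpr (by omega)
    rw [← Finset.mul_prod_erase _ _ hjm]
    have hfac : p (j - 1 + 1) t ^ (k.choose (j-1)) < 1 := by
      have hje : j - 1 + 1 = j := by omega
      rw [hje]
      apply pow_lt_one₀ (hp01 j t).1 (lt_of_le_of_ne (hp01 j t).2 hpj)
      have : 0 < k.choose (j-1) := Nat.choose_pos (by omega)
      omega
    calc p (j - 1 + 1) t ^ (k.choose (j-1))
          * ∏ i ∈ (Finset.range (k+1)).erase (j-1), p (i+1) t ^ (k.choose i)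
        ≤ p (j - 1 + 1) t ^ (k.choose (j-1)) * 1 := by
          apply mul_le_mul_of_nonneg_left _ (pow_nonneg (hp01 _ t).1 _)
          exact Finset.prod_le_one (fun i _ => pow_nonneg (hp01 _ t).1 _)
            (fun i _ => pow_le_one₀ (hp01 _ t).1 (hp01 _ t).2)
      _ < 1 := by rw [mul_one]; exact hfac
  calc rPrevFun (P p) k t * ∏ i ∈ Finset.range (k + 1), p (i+1) t ^ (k.choose i)
      < rPrevFun (P p) k t * 1 := by
        exact mul_lt_mul_of_pos_left hD hrPrev_pos
    _ = rPrevFun (P p) k t := mul_one _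

lemma rCur_rightCont (k : ℕ) (t : ℝ) :
    ContinuousWithinAt (rCurFun (P p) k) (Set.Ici t) t := by
  unfold rCurFun
  exact tendsto_finset_prod _ (fun i _ => ((p i).right_continuous t).pow _)


lemma genInv_le {f : ℝ → ℝ} {u t : ℝ} (ht : 0 ≤ t) (h : u < f t) :
    genInv f u ≤ ENNReal.ofReal t :=
  sInf_le ⟨t, rfl, ht, h⟩

lemma le_genInv {f : ℝ → ℝ} {u c : ℝ} (h : ∀ s : ℝ, 0 ≤ s → u < f s → c ≤ s) :
    ENNReal.ofReal c ≤ genInv f u := by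
  apply le_sInf
  rintro x ⟨s, rfl, hs0, hus⟩
  exact ENNReal.ofReal_le_ofReal (h s hs0 hus)

lemma dichotomy (hp01 : ∀ i, ∀ t : ℝ, p i t ∈ Set.Icc (0 : ℝ) 1) (k : ℕ)
    (hΦΨ : ∀ u : ℝ, 0 ≤ u → u < 1 →
      phiInt (rCurFun (P p) k) (qFun (P p) k) u = phiInt (rPrevFun (P p) k) (qFun (P p) k) u)
    (t : ℝ) (ht : 0 ≤ t) :
    qFun (P p) k t = 0 ∨ ∀ i, 1 ≤ i → i ≤ k + 1 → p i t = 1 := by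
  by_contra hc
  push_neg at hc
  obtain ⟨hq, j, hj1, hjk, hpj⟩ := hc
  have hlt := rCur_lt_rPrev p hp01 k t hq hj1 hjk hpj
  set u := (rCurFun (P p) k t + rPrevFun (P p) k t) / 2 with hu_def
  have hrPrev_le_one : rPrevFun (P p) k t ≤ 1 := prod_pow_le_one p hp01 _ t
  have hrCur_nonneg : 0 ≤ rCurFun (P p) k t := prod_pow_nonneg p hp01 _ t
  have hcu : rCurFun (P p) k t < u := by rw [hu_def]; linarith
  have hup : u < rPrevFun (P p) k t := by rw [hu_def]; linarith
  have hu0 : 0 ≤ u := by rw [hu_def]; linarith [prod_pow_nonneg p hp01 (m := k+1) (fun i => k.choose i) t]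
  have hu1 : u < 1 := lt_of_lt_of_le hup hrPrev_le_one
  -- monotonicity facts
  have hmonoCur : Monotone (rCurFun (P p) k) := fun a b hab =>
    prod_pow_mono p hp01 (m := k+2) (fun i => (k+1).choose i) hab
  have hmonoQ : Monotone (qFun (P p) k) := fun a b hab =>
    prod_pow_mono p hp01 (m := k+1) (fun i => (k+1).choose (i+1)) hab
  have hq_nonneg : ∀ s, 0 ≤ qFun (P p) k s := fun s =>
    prod_pow_nonneg p hp01 (fun i => (k+1).choose (i+1)) s
  have hq_le_one : ∀ s, qFun (P p) k s ≤ 1 := fun s =>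
    prod_pow_le_one p hp01 (fun i => (k+1).choose (i+1)) s
  -- right continuity gives t' > t with rCur < u on [t, t')
  have hev : (rCurFun (P p) k) ⁻¹' (Set.Iio u) ∈ nhdsWithin t (Set.Ici t) :=
    rCur_rightCont p k t (Iio_mem_nhds hcu)
  obtain ⟨t', htt', hsub⟩ := (nhdsGE_basis_of_exists_gt ⟨t+1, lt_add_one t⟩).mem_iff.mp hev
  -- generalized inverses
  have hIprev : genInv (rPrevFun (P p) k) u ≤ ENNReal.ofReal t := genInv_le ht hup
  have hIcur : ENNReal.ofReal t' ≤ genInv (rCurFun (P p) k) u := by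
    apply le_genInv
    intro s hs0 hus
    by_contra hst'
    push_neg at hst'
    rcases lt_or_ge s t with h | h
    · exact absurd hus (not_lt.mpr (le_of_lt (lt_of_le_of_lt (hmonoCur h.le) hcu)))
    · exact absurd hus (not_lt.mpr (le_of_lt (hsub ⟨h, hst'⟩)))
  set A := {s : ℝ | 0 ≤ s ∧ ENNReal.ofReal s < genInv (rPrevFun (P p) k) u} with hA_def
  set B := {s : ℝ | 0 ≤ s ∧ ENNReal.ofReal s < genInv (rCurFun (P p) k) u} with hB_def
  have hAB : A ⊆ B := by
    intro s hs
    exact ⟨hs.1, lt_of_lt_of_le (lt_of_lt_of_le hs.2 hIprev)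
      (le_trans (le_of_lt (by
        exact (ENNReal.ofReal_lt_ofReal_iff (lt_of_le_of_lt ht htt')).mpr htt')) hIcur)⟩
  have hAmeas : MeasurableSet A := by
    rw [hA_def]
    exact (measurableSet_Ici (a := (0:ℝ))).inter
      (ENNReal.measurable_ofReal measurableSet_Iio)
  have hBmeas : MeasurableSet B := by
    rw [hB_def]
    exact (measurableSet_Ici (a := (0:ℝ))).inter
      (ENNReal.measurable_ofReal measurableSet_Iio)
  have hAsub : A ⊆ Set.Icc 0 t := by
    intro s hs
    refine ⟨hs.1, ?_⟩
    have := lt_of_lt_of_le hs.2 hIprev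
    by_contra hc2
    push_neg at hc2
    exact absurd this (not_lt.mpr (ENNReal.ofReal_le_ofReal hc2.le))
  have hfin : (∫⁻ s in A, ENNReal.ofReal (qFun (P p) k s)) ≠ ⊤ := by
    have h1 : (∫⁻ s in A, ENNReal.ofReal (qFun (P p) k s)) ≤ ∫⁻ _ in A, 1 :=
      lintegral_mono (fun s => ENNReal.ofReal_le_one.mpr (hq_le_one s))
    rw [setLIntegral_one] at h1
    have h2 : volume A ≤ volume (Set.Icc (0:ℝ) t) := measure_mono hAsub
    rw [Real.volume_Icc] at h2
    exact ne_top_of_le_ne_top ENNReal.ofReal_ne_top (h1.trans h2)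
  have hsplit : phiInt (rCurFun (P p) k) (qFun (P p) k) u
      = (∫⁻ s in A, ENNReal.ofReal (qFun (P p) k s))
        + ∫⁻ s in B \ A, ENNReal.ofReal (qFun (P p) k s) := by
    have hBint : phiInt (rCurFun (P p) k) (qFun (P p) k) u
        = ∫⁻ s in B, ENNReal.ofReal (qFun (P p) k s) := by rw [hB_def]; rfl
    rw [hBint, ← Set.union_diff_cancel hAB,
      lintegral_union (hBmeas.diff hAmeas) Set.disjoint_sdiff_right,
      Set.union_diff_cancel hAB]
  have hzero : (∫⁻ s in B \ A, ENNReal.ofReal (qFun (P p) k s)) = 0 := by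
    have heq := hΦΨ u hu0 hu1
    rw [hsplit] at heq
    have hAint : phiInt (rPrevFun (P p) k) (qFun (P p) k) u
        = ∫⁻ s in A, ENNReal.ofReal (qFun (P p) k s) := by rw [hA_def]; rfl
    rw [hAint] at heq
    have h2 : (∫⁻ s in A, ENNReal.ofReal (qFun (P p) k s)) + 0
        = (∫⁻ s in A, ENNReal.ofReal (qFun (P p) k s)) + ∫⁻ s in B \ A,
          ENNReal.ofReal (qFun (P p) k s) := by rw [add_zero]; exact heq.symm
    exact ((ENNReal.add_right_inj hfin).mp h2).symm
  -- the interval [t, t') sits inside B \ A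
  have hC : Set.Ico t t' ⊆ B \ A := by
    intro s hs
    constructor
    · exact ⟨le_trans ht hs.1, lt_of_lt_of_le
        ((ENNReal.ofReal_lt_ofReal_iff (lt_of_le_of_lt ht htt')).mpr hs.2) hIcur⟩
    · intro hsA
      have := lt_of_lt_of_le hsA.2 hIprev
      have hst : s < t := by
        by_contra hc2
        push_neg at hc2
        exact absurd this (not_lt.mpr (ENNReal.ofReal_le_ofReal hc2))
      exact absurd hs.1 (not_le.mpr hst)
  have hpos : 0 < ∫⁻ s in Set.Ico t t', ENNReal.ofReal (qFun (P p) k s) := by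
    have h1 : ENNReal.ofReal (qFun (P p) k t) * volume (Set.Ico t t')
        ≤ ∫⁻ s in Set.Ico t t', ENNReal.ofReal (qFun (P p) k s) := by
      rw [← setLIntegral_const]
      exact setLIntegral_mono (ENNReal.measurable_ofReal.comp hmonoQ.measurable)
        (fun s hs => ENNReal.ofReal_le_ofReal (hmonoQ hs.1))
    refine lt_of_lt_of_le ?_ h1
    rw [Real.volume_Ico]
    apply ENNReal.mul_pos
    · simp only [ne_eq, ENNReal.ofReal_eq_zero, not_le]
      exact lt_of_le_of_ne (hq_nonneg t) (Ne.symm hq)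
    · simp only [ne_eq, ENNReal.ofReal_eq_zero, not_le]
      linarith
  have : (∫⁻ s in Set.Ico t t', ENNReal.ofReal (qFun (P p) k s)) = 0 :=
    le_antisymm (hzero ▸ lintegral_mono_set hC) zero_le
  rw [this] at hpos
  exact lt_irrefl 0 hpos

end Analysis

section Prob
variable {n : ℕ} (p : ℕ → StieltjesFunction ℝ)

lemma tendsto_bot (hp0 : ∀ i, ∀ t < (0 : ℝ), p i t = 0) (m : ℕ) :
    Filter.Tendsto (p m) Filter.atBot (nhds 0) := by
  apply Filter.Tendsto.congr' _ tendsto_const_nhds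
  filter_upwards [Filter.eventually_atBot.mpr ⟨-1, fun s hs => hp0 m s (by linarith)⟩] with s hs
  exact hs.symm

lemma probMeas (hp0 : ∀ i, ∀ t < (0 : ℝ), p i t = 0)
    (hp1 : ∀ i, Filter.Tendsto (p i) Filter.atTop (nhds 1)) (m : ℕ) :
    IsProbabilityMeasure ((p m).measure) :=
  (p m).isProbabilityMeasure (tendsto_bot p hp0 m) (hp1 m)

lemma null_event (hp0 : ∀ i, ∀ t < (0 : ℝ), p i t = 0)
    (hp1 : ∀ i, Filter.Tendsto (p i) Filter.atTop (nhds 1))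
    (ρ : Finset (Fin n)) {S : Set ℝ} (hS : (p (ρ.card - 1)).measure S = 0) :
    procMeasure n p {ω | ω ρ ∈ S} = 0 := by
  haveI : ∀ σ : Finset (Fin n), SigmaFinite ((p (σ.card - 1)).measure) := fun σ => by
    haveI := probMeas p hp0 hp1 (σ.card - 1)
    infer_instance
  exact Measure.pi_eval_preimage_null _ hS

lemma measure_Iic_eq (hp0 : ∀ i, ∀ t < (0 : ℝ), p i t = 0) (m : ℕ) (t : ℝ) :
    (p m).measure (Set.Iic t) = ENNReal.ofReal (p m t) := by
  rw [StieltjesFunction.measure_Iic (p m) (tendsto_bot p hp0 m) t, sub_zero]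

lemma measure_Ioi_eq_zero (hp0 : ∀ i, ∀ t < (0 : ℝ), p i t = 0)
    (hp1 : ∀ i, Filter.Tendsto (p i) Filter.atTop (nhds 1)) (m : ℕ) {t : ℝ}
    (h1 : p m t = 1) : (p m).measure (Set.Ioi t) = 0 := by
  haveI := probMeas p hp0 hp1 m
  have hIic : (p m).measure (Set.Iic t) = 1 := by
    rw [measure_Iic_eq p hp0 m t, h1, ENNReal.ofReal_one]
  have := measure_compl (μ := (p m).measure) (measurableSet_Iic (a := t)) (measure_ne_top _ _)
  rw [Set.compl_Iic] at this
  rw [this, hIic, measure_univ, tsub_self]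

end Prob

section Meas
variable {n : ℕ}

lemma measurable_memX (σ : Finset (Fin n)) :
    MeasurableSet {q : (Finset (Fin n) → ℝ) × ℝ | σ ∈ XprocAt q.1 q.2} := by
  have hset : {q : (Finset (Fin n) → ℝ) × ℝ | σ ∈ XprocAt q.1 q.2}
      = ⋂ ρ : Finset (Fin n),
        (if σ = ∅ then (∅ : Set ((Finset (Fin n) → ℝ) × ℝ))
          else if ρ ⊆ σ ∧ ρ ≠ ∅ then {q | q.1 ρ ≤ q.2} else Set.univ) := by
    ext q
    simp only [Set.mem_iInter, Set.mem_setOf_eq, XprocAt, Finset.mem_filter,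
      Finset.mem_univ, true_and, Finset.mem_powerset]
    constructor
    · rintro ⟨hne, hall⟩ ρ
      rw [if_neg hne]
      split_ifs with h
      · exact hall ρ h.1 h.2
      · trivial
    · intro hall
      by_cases hne : σ = ∅
      · have := hall σ
        rw [if_pos hne] at this
        exact absurd this (Set.notMem_empty q)
      · refine ⟨hne, fun ρ hsub hρne => ?_⟩
        have := hall ρ
        rw [if_neg hne, if_pos ⟨hsub, hρne⟩] at this
        exact this
  rw [hset]
  apply MeasurableSet.iInter
  intro ρ
  split_ifs
  · exact MeasurableSet.empty
  · exact measurableSet_le (Measurable.eval measurable_fst) measurable_snd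
  · exact MeasurableSet.univ

lemma measurable_XprocAt_eq (c : Finset (Finset (Fin n))) :
    MeasurableSet {q : (Finset (Fin n) → ℝ) × ℝ | XprocAt q.1 q.2 = c} := by
  have hset : {q : (Finset (Fin n) → ℝ) × ℝ | XprocAt q.1 q.2 = c}
      = ⋂ σ : Finset (Fin n),
        (if σ ∈ c then {q : (Finset (Fin n) → ℝ) × ℝ | σ ∈ XprocAt q.1 q.2}
          else {q : (Finset (Fin n) → ℝ) × ℝ | σ ∈ XprocAt q.1 q.2}ᶜ) := by
    ext q
    simp only [Set.mem_iInter, Set.mem_setOf_eq, Finset.ext_iff]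
    constructor
    · intro h σ
      split_ifs with hc
      · exact (h σ).mpr hc
      · exact fun hmem => hc ((h σ).mp hmem)
    · intro h σ
      have := h σ
      split_ifs at this with hc
      · exact ⟨fun _ => hc, fun _ => this⟩
      · exact ⟨fun hmem => absurd hmem this, fun hmem => absurd hmem hc⟩
  rw [hset]
  apply MeasurableSet.iInter
  intro σ
  split_ifs
  · exact measurable_memX σ
  · exact (measurable_memX σ).compl

lemma measurable_betti_fun (F : Finset (Finset (Fin n)) → ℝ≥0∞) :
    Measurable (fun q : (Finset (Fin n) → ℝ) × ℝ => F (XprocAt q.1 q.2)) := by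
  classical
  have : (fun q : (Finset (Fin n) → ℝ) × ℝ => F (XprocAt q.1 q.2))
      = fun q => ∑ c : Finset (Finset (Fin n)),
          Set.indicator {q' : (Finset (Fin n) → ℝ) × ℝ | XprocAt q'.1 q'.2 = c}
            (fun _ => F c) q := by
    funext q
    rw [Finset.sum_eq_single_of_mem (XprocAt q.1 q.2) (Finset.mem_univ _)
      (fun c _ hc => Set.indicator_of_notMem (fun hm => hc (by exact hm.symm ▸ rfl)) _)]
    · exact (Set.indicator_of_mem (show q ∈ {q' : (Finset (Fin n) → ℝ) × ℝ |
        XprocAt q'.1 q'.2 = XprocAt q.1 q.2} from rfl) (fun _ => F (XprocAt q.1 q.2))).symm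
  rw [this]
  exact Finset.measurable_sum _ (fun c _ =>
    Measurable.indicator measurable_const (measurable_XprocAt_eq c))

end Meas

section Main
variable {n k : ℕ}

lemma ae_betti_zero (p : ℕ → StieltjesFunction ℝ)
    (hp0 : ∀ i, ∀ t < (0 : ℝ), p i t = 0)
    (hp1 : ∀ i, Filter.Tendsto (p i) Filter.atTop (nhds 1))
    (t : ℝ)
    (hdich : qFun (fun i t => p i t) k t = 0 ∨ ∀ i, 1 ≤ i → i ≤ k + 1 → p i t = 1) :
    ∀ᵐ ω ∂procMeasure n p, betti (XprocAt ω t) k = 0 := by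
  rcases hdich with hq | hall
  · -- some p i t = 0 for i ≤ k : no (k+1)-card simplices a.s.
    obtain ⟨i, hi, hzero⟩ := Finset.prod_eq_zero_iff.mp hq
    have hik : i ≤ k := by have := Finset.mem_range.mp hi; omega
    have hpi0 : p i t = 0 :=
      (pow_eq_zero_iff (Nat.choose_pos (by omega : i + 1 ≤ k + 1)).ne').mp hzero
    have hae : ∀ᵐ ω ∂procMeasure n p, ∀ ρ : Finset (Fin n), ρ.card = i + 1 → t < ω ρ := by
      rw [ae_all_iff]
      intro ρ
      by_cases hcard : ρ.card = i + 1
      · rw [ae_iff]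
        have hnull := null_event p hp0 hp1 ρ (S := Set.Iic t) (by
          rw [measure_Iic_eq p hp0, show ρ.card - 1 = i by omega, hpi0, ENNReal.ofReal_zero])
        refine measure_mono_null (fun ω hω => ?_) hnull
        simp only [Set.mem_setOf_eq, not_forall, not_lt] at hω
        obtain ⟨_, h2⟩ := hω
        exact h2
      · exact ae_of_all _ (fun ω h => absurd h hcard)
    filter_upwards [hae] with ω hω
    apply betti_zero_of_no_faces
    rw [Finset.eq_empty_iff_forall_notMem]
    intro s hs
    rw [faces, Finset.mem_filter, Finset.mem_insert] at hs
    have hcard : s.card = k + 1 := hs.2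
    have hsX : s ∈ XprocAt ω t := by
      rcases hs.1 with rfl | h
      · rw [Finset.card_empty] at hcard; omega
      · exact h
    rw [XprocAt, Finset.mem_filter] at hsX
    obtain ⟨ρ, hρsub, hρcard⟩ := Finset.exists_subset_card_eq (show i + 1 ≤ s.card by omega)
    have hρne : ρ ≠ ∅ := by
      intro h; rw [h, Finset.card_empty] at hρcard; omega
    have := hsX.2.2 ρ (Finset.mem_powerset.mpr hρsub) hρne
    exact absurd this (not_le.mpr (hω ρ hρcard))
  · -- all p i t = 1 for 1 ≤ i ≤ k+1 : complete (k+1)-skeleton a.s.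
    have hae : ∀ᵐ ω ∂procMeasure n p,
        ∀ ρ : Finset (Fin n), 2 ≤ ρ.card → ρ.card ≤ k + 2 → ω ρ ≤ t := by
      rw [ae_all_iff]
      intro ρ
      by_cases hcard : 2 ≤ ρ.card ∧ ρ.card ≤ k + 2
      · rw [ae_iff]
        have hnull := null_event p hp0 hp1 ρ (S := Set.Ioi t) (measure_Ioi_eq_zero p hp0 hp1 _
          (hall (ρ.card - 1) (by omega) (by omega)))
        refine measure_mono_null (fun ω hω => ?_) hnull
        simp only [Set.mem_setOf_eq, not_forall, not_le] at hω
        exact hω.2.2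
      · exact ae_of_all _ (fun ω h2 hk2 => absurd ⟨h2, hk2⟩ hcard)
    filter_upwards [hae] with ω hω
    classical
    apply betti_eq_zero_of_skeleton (XprocAt ω t)
      (Finset.univ.filter (fun v => ω {v} ≤ t))
    intro s hne hcard
    constructor
    · intro hsX v hv
      rw [Finset.mem_filter]
      refine ⟨Finset.mem_univ v, ?_⟩
      rw [XprocAt, Finset.mem_filter] at hsX
      exact hsX.2.2 {v} (Finset.mem_powerset.mpr (Finset.singleton_subset_iff.mpr hv))
        (Finset.singleton_ne_empty v)
    · intro hsV
      rw [XprocAt, Finset.mem_filter]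
      refine ⟨Finset.mem_univ s, hne, fun ρ hρ hρne => ?_⟩
      rw [Finset.mem_powerset] at hρ
      rcases Nat.lt_or_ge ρ.card 2 with h2 | h2
      · have hc1 : ρ.card = 1 := by
          have := Finset.card_pos.mpr (Finset.nonempty_of_ne_empty hρne); omega
        obtain ⟨v, rfl⟩ := Finset.card_eq_one.mp hc1
        have hv : v ∈ s := hρ (Finset.mem_singleton_self v)
        have := hsV hv
        rw [Finset.mem_filter] at this
        exact this.2
      · exact hω ρ h2 ((Finset.card_le_card hρ).trans hcard)

end Main

theorem statement17 (n k : ℕ) (p : ℕ → StieltjesFunction ℝ)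
    (hp01 : ∀ i, ∀ t : ℝ, p i t ∈ Set.Icc (0 : ℝ) 1)
    (hp0 : ∀ i, ∀ t < (0 : ℝ), p i t = 0)
    (hp1 : ∀ i, Filter.Tendsto (p i) Filter.atTop (nhds 1))
    (hΦΨ : ∀ u : ℝ, 0 ≤ u → u < 1 →
      phiInt (rCurFun (fun i t => p i t) k) (qFun (fun i t => p i t) k) u
        = phiInt (rPrevFun (fun i t => p i t) k) (qFun (fun i t => p i t) k) u) :
    (∀ t : ℝ, 0 ≤ t →
      qFun (fun i t => p i t) k t = 0 ∨ ∀ i, 1 ≤ i → i ≤ k + 1 → p i t = 1) ∧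
    (∀ t : ℝ, 0 ≤ t → ∀ᵐ ω ∂procMeasure n p, betti (XprocAt ω t) k = 0) ∧
    ∀ᵐ ω ∂procMeasure n p,
      (∫⁻ t in Set.Ici (0 : ℝ), (betti (XprocAt ω t) k : ℝ≥0∞)) = 0 := by
  have hdich : ∀ t : ℝ, 0 ≤ t →
      qFun (fun i t => p i t) k t = 0 ∨ ∀ i, 1 ≤ i → i ≤ k + 1 → p i t = 1 :=
    fun t ht => dichotomy p hp01 k hΦΨ t ht
  have hae : ∀ t : ℝ, 0 ≤ t → ∀ᵐ ω ∂procMeasure n p, betti (XprocAt ω t) k = 0 :=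
    fun t ht => ae_betti_zero p hp0 hp1 t (hdich t ht)
  refine ⟨hdich, fun t ht => hae t ht, ?_⟩
  haveI hprob : ∀ σ : Finset (Fin n), IsProbabilityMeasure ((p (σ.card - 1)).measure) :=
    fun σ => probMeas p hp0 hp1 (σ.card - 1)
  haveI : IsProbabilityMeasure (procMeasure n p) := by
    unfold procMeasure; infer_instance
  set f : (Finset (Fin n) → ℝ) → ℝ → ℝ≥0∞ :=
    fun ω t => (betti (XprocAt ω t) k : ℝ≥0∞) with hf_def
  have hmeas : Measurable (Function.uncurry f) :=
    measurable_betti_fun (fun c => (betti c k : ℝ≥0∞))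
  have hswap := lintegral_lintegral_swap (μ := procMeasure n p)
    (ν := volume.restrict (Set.Ici 0)) hmeas.aemeasurable
  have hinner : ∀ t ∈ Set.Ici (0:ℝ), (∫⁻ ω, f ω t ∂procMeasure n p) = 0 := by
    intro t ht
    have h := hae t ht
    calc (∫⁻ ω, f ω t ∂procMeasure n p) = ∫⁻ _, 0 ∂procMeasure n p :=
          lintegral_congr_ae (h.mono fun ω hω => by rw [hf_def]; simp [hω])
      _ = 0 := lintegral_zero
  have hrhs : (∫⁻ t in Set.Ici (0:ℝ), ∫⁻ ω, f ω t ∂procMeasure n p) = 0 := by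
    rw [setLIntegral_congr_fun measurableSet_Ici hinner, lintegral_zero]
  have h0 : (∫⁻ ω, (∫⁻ t in Set.Ici (0:ℝ), f ω t) ∂procMeasure n p) = 0 := by
    rw [hswap]; exact hrhs
  have hFmeas : Measurable fun ω => ∫⁻ t in Set.Ici (0:ℝ), f ω t :=
    hmeas.lintegral_prod_right
  have := (lintegral_eq_zero_iff hFmeas).mp h0
  filter_upwards [this] with ω h
  simpa using h
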